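/- Let δ, Δ > 0 with Δ > δ, and let A be a row-wise (δ,Δ)-M-matrix of size N. Then ‖A⁻¹‖_∞ ≤ c_{N}, where c_p = ((Δ/δ)^p − 1)/(Δ − δ); that is, the supremum norm of the inverse of A is bounded by a constant depending only on δ, Δ and N. -/

import Mathlib

open Matrix

/-- A `δ`-transmissive path from `i` to `j` in the matrix `A`: a list of distinct
indices `k₀ = i, …, k_L = j` with `A (k_p) (k_{p+1}) < -δ`. -/
def TransmissivePath {N : ℕ} (δ : ℝ) (A : Matrix (Fin N) (Fin N) ℝ)
    (i j : Fin N) : Prop :=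
  ∃ (L : ℕ) (k : Fin (L + 1) → Fin N),
    Function.Injective k ∧ k 0 = i ∧ k (Fin.last L) = j ∧
    ∀ p : Fin L, A (k p.castSucc) (k p.succ) < -δ

/-- `A` is a row-wise `(δ,Δ)`-M-matrix. -/
def IsRowMMatrix {N : ℕ} (δ Δ : ℝ) (A : Matrix (Fin N) (Fin N) ℝ) : Prop :=
  (∀ i, δ ≤ A i i ∧ A i i ≤ Δ) ∧
  (∀ i j, j ≠ i → A i j ≤ 0) ∧
  (∀ i, 0 ≤ ∑ j, A i j) ∧
  (∃ i, δ ≤ ∑ j, A i j) ∧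
  (∀ i, ¬ δ ≤ ∑ j, A i j → ∃ j, δ ≤ ∑ l, A j l ∧ TransmissivePath δ A i j)

noncomputable def cseq (δ Δ : ℝ) (p : ℕ) : ℝ := ((Δ / δ) ^ p - 1) / (Δ - δ)

lemma cseq_zero (δ Δ : ℝ) : cseq δ Δ 0 = 0 := by simp [cseq]

lemma cseq_rec {δ Δ : ℝ} (hδ : 0 < δ) (hδΔ : δ < Δ) (p : ℕ) :
    δ * cseq δ Δ (p + 1) = 1 + Δ * cseq δ Δ p := by
  have h1 : δ ≠ 0 := ne_of_gt hδ
  have h2 : Δ - δ ≠ 0 := by linarith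
  simp only [cseq, pow_succ]
  field_simp
  ring

lemma cseq_mono {δ Δ : ℝ} (hδ : 0 < δ) (hδΔ : δ < Δ) {p q : ℕ} (h : p ≤ q) :
    cseq δ Δ p ≤ cseq δ Δ q := by
  have h1 : (1 : ℝ) ≤ Δ / δ := le_of_lt ((one_lt_div hδ).mpr hδΔ)
  have h2 : (0 : ℝ) < Δ - δ := by linarith
  have h3 : (Δ / δ) ^ p ≤ (Δ / δ) ^ q := pow_le_pow_right₀ h1 h
  exact (div_le_div_iff_of_pos_right h2).mpr (by linarith)

lemma key_bound {N : ℕ} {δ Δ : ℝ} (hδ : 0 < δ) (hδΔ : δ < Δ)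
    {A : Matrix (Fin N) (Fin N) ℝ} (hA : IsRowMMatrix δ Δ A)
    (z : Fin N → ℝ) (β : ℝ) (hβ : ∀ j, |A.mulVec z j| ≤ β)
    (i : Fin N) (hi : ∀ j, |z j| ≤ z i) :
    z i ≤ cseq δ Δ N * β := by
  obtain ⟨hdiag, hoff, hrow, -, hpaths⟩ := hA
  set m := z i with hmdef
  have hm : ∀ j, z j ≤ m := fun j => (le_abs_self _).trans (hi j)
  have hm0 : 0 ≤ m := (abs_nonneg _).trans (hi i)
  have hβ' : ∀ j, A.mulVec z j ≤ β := fun j => (le_abs_self _).trans (hβ j)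
  have hβ0 : 0 ≤ β := (abs_nonneg _).trans (hβ i)
  have hΔ0 : (0 : ℝ) < Δ := hδ.trans hδΔ
  have hkey : ∀ r, (∑ j, A r j * (z j - m)) = A.mulVec z r - (∑ j, A r j) * m := by
    intro r
    simp only [Matrix.mulVec, dotProduct, mul_sub, Finset.sum_sub_distrib,
      Finset.sum_mul]
  -- step inequality
  have hstep : ∀ r s : Fin N, s ≠ r → A r s < -δ →
      δ * (m - z s) ≤ β + Δ * (m - z r) := by
    intro r s hsr hAs
    have h1 : A r r * (z r - m) + A r s * (z s - m) ≤ ∑ j, A r j * (z j - m) := by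
      have hpair : ∑ x ∈ ({r, s} : Finset (Fin N)), A r x * (z x - m) =
          A r r * (z r - m) + A r s * (z s - m) := Finset.sum_pair (Ne.symm hsr)
      rw [← hpair]
      refine Finset.sum_le_sum_of_subset_of_nonneg (Finset.subset_univ _) ?_
      intro j _ hj
      simp only [Finset.mem_insert, Finset.mem_singleton, not_or] at hj
      rw [← neg_mul_neg]
      exact mul_nonneg (by linarith [hoff r j hj.1]) (by linarith [hm j])
    have h2 : ∑ j, A r j * (z j - m) ≤ β - (∑ j, A r j) * m := by
      rw [hkey r]; linarith [hβ' r]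
    have h3 : 0 ≤ (∑ j, A r j) * m := mul_nonneg (hrow r) hm0
    have h4 : A r r * (m - z r) ≤ Δ * (m - z r) :=
      mul_le_mul_of_nonneg_right (hdiag r).2 (by linarith [hm r])
    have h5 : δ * (m - z s) ≤ (-(A r s)) * (m - z s) :=
      mul_le_mul_of_nonneg_right (by linarith) (by linarith [hm s])
    nlinarith
  -- final inequality at a row with large row sum
  have hfin : ∀ r : Fin N, δ ≤ ∑ l, A r l → δ * m ≤ β + Δ * (m - z r) := by
    intro r hr
    have h1 : A r r * (z r - m) ≤ ∑ j, A r j * (z j - m) := by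
      have : ∑ j ∈ ({r} : Finset (Fin N)), A r j * (z j - m) = A r r * (z r - m) := by
        simp
      rw [← this]
      refine Finset.sum_le_sum_of_subset_of_nonneg (Finset.subset_univ _) ?_
      intro j _ hj
      simp only [Finset.mem_singleton] at hj
      rw [← neg_mul_neg]
      exact mul_nonneg (by linarith [hoff r j hj]) (by linarith [hm j])
    have h2 : ∑ j, A r j * (z j - m) ≤ β - (∑ j, A r j) * m := by
      rw [hkey r]; linarith [hβ' r]
    have h3 : δ * m ≤ (∑ j, A r j) * m := mul_le_mul_of_nonneg_right hr hm0
    have h4 : A r r * (m - z r) ≤ Δ * (m - z r) :=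
      mul_le_mul_of_nonneg_right (hdiag r).2 (by linarith [hm r])
    nlinarith
  by_cases hIi : δ ≤ ∑ l, A i l
  · have h1 := hfin i hIi
    have h2 : δ * m ≤ δ * (cseq δ Δ 1 * β) := by
      have hr := cseq_rec hδ hδΔ 0
      rw [cseq_zero] at hr
      nlinarith
    have h3 : m ≤ cseq δ Δ 1 * β := le_of_mul_le_mul_left h2 hδ
    refine h3.trans (mul_le_mul_of_nonneg_right (cseq_mono hδ hδΔ ?_) hβ0)
    exact i.pos
  · obtain ⟨j, hj, L, k, kinj, hk0, hkL, hpath⟩ := hpaths i hIi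
    have hLN : L + 1 ≤ N := by
      simpa using Fintype.card_le_of_injective k kinj
    have hind : ∀ p : ℕ, ∀ h : p ≤ L, m - z (k ⟨p, by omega⟩) ≤ cseq δ Δ p * β := by
      intro p
      induction p with
      | zero =>
        intro _
        have : k ⟨0, by omega⟩ = i := hk0
        rw [this, cseq_zero]
        simp [hmdef]
      | succ p ih =>
        intro h
        have hp : p ≤ L := by omega
        have IH := ih hp
        have hPA := hpath ⟨p, by omega⟩
        have hcast : (⟨p, by omega⟩ : Fin L).castSucc = (⟨p, by omega⟩ : Fin (L + 1)) := rfl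
        have hsucc : (⟨p, by omega⟩ : Fin L).succ = (⟨p + 1, by omega⟩ : Fin (L + 1)) := rfl
        rw [hcast, hsucc] at hPA
        have hne : k ⟨p + 1, by omega⟩ ≠ k ⟨p, by omega⟩ := by
          intro he
          have := kinj he
          simp only [Fin.mk.injEq] at this
          omega
        have hst := hstep _ _ hne hPA
        have hr := cseq_rec hδ hδΔ p
        have h2 : δ * (m - z (k ⟨p + 1, by omega⟩)) ≤ δ * (cseq δ Δ (p + 1) * β) := by
          nlinarith
        exact le_of_mul_le_mul_left h2 hδ
    have hlast : m - z j ≤ cseq δ Δ L * β := by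
      have := hind L le_rfl
      have hkl : k ⟨L, by omega⟩ = j := hkL
      rwa [hkl] at this
    have hf := hfin j hj
    have hr := cseq_rec hδ hδΔ L
    have h2 : δ * m ≤ δ * (cseq δ Δ (L + 1) * β) := by nlinarith
    have h3 : m ≤ cseq δ Δ (L + 1) * β := le_of_mul_le_mul_left h2 hδ
    exact h3.trans (mul_le_mul_of_nonneg_right (cseq_mono hδ hδΔ hLN) hβ0)

lemma key_abs {N : ℕ} {δ Δ : ℝ} (hδ : 0 < δ) (hδΔ : δ < Δ)
    {A : Matrix (Fin N) (Fin N) ℝ} (hA : IsRowMMatrix δ Δ A)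
    (z : Fin N → ℝ) (β : ℝ) (hβ : ∀ j, |A.mulVec z j| ≤ β)
    (i : Fin N) : |z i| ≤ cseq δ Δ N * β := by
  obtain ⟨t, -, ht⟩ := Finset.exists_max_image Finset.univ (fun j => |z j|)
    ⟨i, Finset.mem_univ i⟩
  have hti : |z i| ≤ |z t| := ht i (Finset.mem_univ i)
  rcases abs_cases (z t) with ⟨he, -⟩ | ⟨he, -⟩
  · refine hti.trans ?_
    rw [he]
    exact key_bound hδ hδΔ hA z β hβ t (fun j => he ▸ ht j (Finset.mem_univ j))
  · refine hti.trans ?_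
    rw [he]
    have hβ' : ∀ j, |A.mulVec (-z) j| ≤ β := by
      intro j
      rw [Matrix.mulVec_neg]
      simpa using hβ j
    have hi' : ∀ j, |(-z) j| ≤ (-z) t := by
      intro j
      simp only [Pi.neg_apply]
      rw [abs_neg]
      calc |z j| ≤ |z t| := ht j (Finset.mem_univ j)
        _ = -z t := he
    have := key_bound hδ hδΔ hA (-z) β hβ' t hi'
    simpa using this

theorem stmt_8 (N : ℕ) (δ Δ : ℝ) (hδ : 0 < δ) (hδΔ : δ < Δ)
    (A : Matrix (Fin N) (Fin N) ℝ) (hA : IsRowMMatrix δ Δ A) :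
    IsUnit A ∧ ∀ i, ∑ j, |A⁻¹ i j| ≤ ((Δ / δ) ^ N - 1) / (Δ - δ) := by
  have hdet : A.det ≠ 0 := by
    intro h
    obtain ⟨v, hv, hAv⟩ := Matrix.exists_mulVec_eq_zero_iff.mpr h
    apply hv
    funext i
    have := key_abs hδ hδΔ hA v 0 (fun j => by simp [hAv]) i
    simp only [mul_zero] at this
    have := abs_nonpos_iff.mp this
    simpa using this
  have hu : IsUnit A := (Matrix.isUnit_iff_isUnit_det A).mpr (isUnit_iff_ne_zero.mpr hdet)
  refine ⟨hu, fun i => ?_⟩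
  set y : Fin N → ℝ := fun j => if 0 ≤ A⁻¹ i j then 1 else -1 with hy
  have hAz : A.mulVec (A⁻¹.mulVec y) = y := by
    rw [Matrix.mulVec_mulVec, Matrix.mul_nonsing_inv A (isUnit_iff_ne_zero.mpr hdet),
      Matrix.one_mulVec]
  have hβ : ∀ j, |A.mulVec (A⁻¹.mulVec y) j| ≤ 1 := by
    intro j
    rw [hAz, hy]
    dsimp only
    split <;> norm_num
  have hb := key_abs hδ hδΔ hA (A⁻¹.mulVec y) 1 hβ i
  have hz : (A⁻¹.mulVec y) i = ∑ j, |A⁻¹ i j| := by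
    simp only [Matrix.mulVec, dotProduct, hy]
    refine Finset.sum_congr rfl fun j _ => ?_
    by_cases hc : 0 ≤ A⁻¹ i j
    · rw [if_pos hc, mul_one, abs_of_nonneg hc]
    · rw [if_neg hc, mul_neg_one, abs_of_neg (lt_of_not_ge hc)]
  calc ∑ j, |A⁻¹ i j| = (A⁻¹.mulVec y) i := hz.symm
    _ ≤ |(A⁻¹.mulVec y) i| := le_abs_self _
    _ ≤ cseq δ Δ N * 1 := hb
    _ = ((Δ / δ) ^ N - 1) / (Δ - δ) := by rw [mul_one]; rfl
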